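/- The NL-Ridge objective with affine constraints rescales equivariantly: let Z ∈ ℝ^{n×k}, let J ∈ ℝ^{n×k} be the all-ones matrix, let h : ℝ^{k×k} → ℝ be any function, and let Θ ∈ ℝ^{k×k} satisfy Θᵀ1ₖ = 1ₖ (each column of Θ sums to 1, i.e., Θ encodes affine combinations of patches). Then for all real λ > 0, μ ∈ ℝ and σ ∈ ℝ: ‖(λZ + μJ)Θ − (λZ + μJ)‖_F² + n(λσ)²·h(Θ) = λ²·( ‖ZΘ − Z‖_F² + nσ²·h(Θ) ), where ‖·‖_F is the Frobenius norm. Consequently, the affine-constrained minimizers of NL-Ridge are normalization-invariant. -/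
import Mathlib


/-- The Frobenius norm of a real matrix. -/
noncomputable def frobNorm {n k : ℕ} (M : Matrix (Fin n) (Fin k) ℝ) : ℝ :=
  Real.sqrt (∑ i, ∑ j, (M i j) ^ 2)

/-- The all-ones `n × k` matrix. -/
def allOnesMatrix (n k : ℕ) : Matrix (Fin n) (Fin k) ℝ := Matrix.of fun _ _ => (1 : ℝ)

lemma frobNorm_sq {n k : ℕ} (M : Matrix (Fin n) (Fin k) ℝ) :
    frobNorm M ^ 2 = ∑ i, ∑ j, (M i j) ^ 2 := by
  apply Real.sq_sqrt
  positivity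

/-- The NL-Ridge objective with affine constraints rescales equivariantly: if every
column of `Θ` sums to `1`, then for `λ > 0`,
`‖(λZ + μJ)Θ − (λZ + μJ)‖_F² + n(λσ)²·h(Θ) = λ²·(‖ZΘ − Z‖_F² + nσ²·h(Θ))`. -/
theorem nlridge_objective_rescales {n k : ℕ} (Z : Matrix (Fin n) (Fin k) ℝ)
    (h : Matrix (Fin k) (Fin k) ℝ → ℝ) (Θ : Matrix (Fin k) (Fin k) ℝ)
    (hΘ : Θ.transpose.mulVec (fun _ => (1 : ℝ)) = fun _ => (1 : ℝ))
    (l μ σ : ℝ) (hl : 0 < l) :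
    frobNorm ((l • Z + μ • allOnesMatrix n k) * Θ - (l • Z + μ • allOnesMatrix n k)) ^ 2
      + n * (l * σ) ^ 2 * h Θ
    = l ^ 2 * (frobNorm (Z * Θ - Z) ^ 2 + n * σ ^ 2 * h Θ) := by
  have hcol : ∀ j, ∑ m, Θ m j = 1 := by
    intro j
    have := congrFun hΘ j
    simpa [Matrix.mulVec, dotProduct, Matrix.transpose] using this
  rw [frobNorm_sq, frobNorm_sq]
  have key : ∀ i j, ((l • Z + μ • allOnesMatrix n k) * Θ
      - (l • Z + μ • allOnesMatrix n k)) i j = l * ((Z * Θ - Z) i j) := by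
    intro i j
    simp only [Matrix.sub_apply, Matrix.mul_apply, Matrix.add_apply, Matrix.smul_apply,
      allOnesMatrix, Matrix.of_apply, smul_eq_mul, mul_one]
    rw [Finset.sum_congr rfl (fun m _ => add_mul (l * Z i m) μ (Θ m j)),
      Finset.sum_add_distrib, ← Finset.mul_sum, hcol j]
    rw [mul_sub, Finset.mul_sum]
    simp only [show ∀ a : Fin k, l * (Z i a * Θ a j) = l * Z i a * Θ a j from fun a => by ring]
    ring
  simp only [key]
  rw [show ∀ (A : Matrix (Fin n) (Fin k) ℝ), ∑ i, ∑ j, (l * A i j) ^ 2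
      = l ^ 2 * ∑ i, ∑ j, (A i j) ^ 2 from fun A => by
    simp [Finset.mul_sum, mul_pow]]
  ring
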